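/- Let weighted balls with weights w_1, …, w_m summing to W be placed independently and uniformly at random into P bins, where each weight satisfies w_i < W/(P log P). Then with high probability in P, every bin receives total weight O(W/P). -/

import Mathlib

open MeasureTheory ProbabilityTheory

/-- Convexity bound: for `0 ≤ x ≤ 1`, `exp x ≤ 1 + (e - 1) * x`. -/
lemma exp_le_linear_aux {x : ℝ} (hx0 : 0 ≤ x) (hx1 : x ≤ 1) :
    Real.exp x ≤ 1 + (Real.exp 1 - 1) * x := by
  have h := convexOn_exp.2 (Set.mem_univ (0 : ℝ)) (Set.mem_univ (1 : ℝ))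
    (by linarith : (0:ℝ) ≤ 1 - x) hx0 (by ring)
  simp only [smul_eq_mul, mul_zero, mul_one, zero_add, Real.exp_zero] at h
  calc Real.exp x = Real.exp ((1 - x) * 0 + x * 1) := by ring_nf
    _ ≤ (1 - x) * 1 + x * Real.exp 1 := by simpa using h
    _ = 1 + (Real.exp 1 - 1) * x := by ring

/-- Per-bin Chernoff bound. -/
lemma bin_bound {Ω : Type} [MeasureSpace Ω] [IsProbabilityMeasure (ℙ : Measure Ω)]
    {P m : ℕ} (hP : 2 ≤ P) {w : Fin m → ℝ} (hw : ∀ i, 0 ≤ w i)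
    (hwlt : ∀ i, w i < (∑ j, w j) / (P * Real.log P))
    (hW : 0 < ∑ j, w j)
    (X : Fin m → Ω → Fin P) (hX : ∀ i, Measurable (X i))
    (hindep : iIndepFun X ℙ)
    (hunif : ∀ i b, ℙ {ω | X i ω = b} = (P : ENNReal)⁻¹)
    (b : Fin P) :
    ℙ {ω | (Real.exp 1 + 2) * (∑ j, w j) / P ≤
        ∑ i ∈ Finset.univ.filter (fun i => X i ω = b), w i}
      ≤ ENNReal.ofReal ((P : ℝ) ^ (-3 : ℝ)) := by
  classical
  set W : ℝ := ∑ j, w j with hWdef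
  have hP0 : (0:ℝ) < P := by positivity
  have hP1 : (1:ℝ) < P := by exact_mod_cast lt_of_lt_of_le one_lt_two (by exact_mod_cast hP)
  have hlogP : 0 < Real.log P := Real.log_pos hP1
  set t : ℝ := P * Real.log P / W with htdef
  have ht : 0 < t := by positivity
  have htW : t * W = P * Real.log P := by
    rw [htdef, div_mul_cancel₀ _ hW.ne']
  -- the weighted indicator variables
  set g : Fin m → Fin P → ℝ := fun i x => if x = b then w i else 0 with hgdef
  set Y : Fin m → Ω → ℝ := fun i ω => g i (X i ω) with hYdef
  have hYmeas : ∀ i, Measurable (Y i) := fun i =>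
    (measurable_of_countable (g i)).comp (hX i)
  have hYindep : iIndepFun Y ℙ :=
    hindep.comp g (fun i => measurable_of_countable (g i))
  -- pointwise description of exp (t * Y i)
  have hset : ∀ i : Fin m, MeasurableSet (X i ⁻¹' {b}) :=
    fun i => (hX i) (measurableSet_singleton b)
  have hexpY : ∀ i : Fin m, (fun ω => Real.exp (t * Y i ω)) =
      fun ω => (X i ⁻¹' {b}).indicator (fun _ => Real.exp (t * w i) - 1) ω + 1 := by
    intro i
    funext ω
    by_cases h : X i ω = b
    · simp [hYdef, hgdef, h, Set.indicator_of_mem, Set.mem_preimage]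
    · simp [hYdef, hgdef, h, Set.indicator_of_notMem, Set.mem_preimage]
  have hint : ∀ i : Fin m, Integrable (fun ω => Real.exp (t * Y i ω)) ℙ := by
    intro i
    rw [hexpY i]
    exact ((integrable_const _).indicator (hset i)).add (integrable_const 1)
  -- probability of the preimage
  have hprob : ∀ i : Fin m, (ℙ (X i ⁻¹' {b})).toReal = (P:ℝ)⁻¹ := by
    intro i
    have : X i ⁻¹' {b} = {ω | X i ω = b} := by ext ω; simp
    rw [this, hunif i b, ENNReal.toReal_inv]
    simp
  -- compute the mgf of each Y i
  have hmgf : ∀ i : Fin m, mgf (Y i) ℙ t = (Real.exp (t * w i) - 1) * (P:ℝ)⁻¹ + 1 := by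
    intro i
    rw [mgf, hexpY i, integral_add ((integrable_const _).indicator (hset i)) (integrable_const 1),
      integral_indicator_const _ (hset i), integral_const]
    simp [hprob i, mul_comm, measureReal_def]
  -- bound the mgf of each Y i
  have htwi : ∀ i : Fin m, 0 ≤ t * w i ∧ t * w i ≤ 1 := by
    intro i
    constructor
    · exact mul_nonneg ht.le (hw i)
    · have h1 := hwlt i
      have h2 : t * w i < t * (W / (P * Real.log P)) := by
        exact mul_lt_mul_of_pos_left h1 ht
      have h3 : t * (W / (P * Real.log P)) = 1 := by
        rw [← mul_div_assoc, htW]; exact div_self (by positivity)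
      linarith
  have hmgf_le : ∀ i : Fin m, mgf (Y i) ℙ t ≤
      Real.exp ((Real.exp 1 - 1) * (t * w i) * (P:ℝ)⁻¹) := by
    intro i
    rw [hmgf i]
    have h1 : Real.exp (t * w i) - 1 ≤ (Real.exp 1 - 1) * (t * w i) := by
      have := exp_le_linear_aux (htwi i).1 (htwi i).2
      linarith
    have h2 : (Real.exp (t * w i) - 1) * (P:ℝ)⁻¹ ≤ (Real.exp 1 - 1) * (t * w i) * (P:ℝ)⁻¹ := by
      apply mul_le_mul_of_nonneg_right h1 (by positivity)
    calc (Real.exp (t * w i) - 1) * (P:ℝ)⁻¹ + 1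
        ≤ (Real.exp 1 - 1) * (t * w i) * (P:ℝ)⁻¹ + 1 := by linarith
      _ ≤ Real.exp ((Real.exp 1 - 1) * (t * w i) * (P:ℝ)⁻¹) := Real.add_one_le_exp _
  -- mgf of the sum
  have hmgf_sum : mgf (∑ i, Y i) ℙ t ≤ Real.exp ((Real.exp 1 - 1) * Real.log P) := by
    rw [hYindep.mgf_sum hYmeas Finset.univ]
    have h1 : ∏ i, mgf (Y i) ℙ t ≤
        ∏ i, Real.exp ((Real.exp 1 - 1) * (t * w i) * (P:ℝ)⁻¹) := by
      apply Finset.prod_le_prod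
      · intro i _
        exact mgf_nonneg
      · intro i _
        exact hmgf_le i
    refine h1.trans ?_
    rw [← Real.exp_sum]
    apply Real.exp_le_exp.mpr
    have hsum : ∑ i, (Real.exp 1 - 1) * (t * w i) * (P:ℝ)⁻¹
        = (Real.exp 1 - 1) * t * (P:ℝ)⁻¹ * W := by
      rw [hWdef, Finset.mul_sum]
      apply Finset.sum_congr rfl
      intro i _
      ring
    rw [hsum]
    have : (Real.exp 1 - 1) * t * (P:ℝ)⁻¹ * W = (Real.exp 1 - 1) * (t * W) / P := by ring
    rw [this, htW]
    have hPne : (P:ℝ) ≠ 0 := ne_of_gt hP0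
    rw [mul_div_assoc, mul_div_assoc]
    apply le_of_eq
    congr 1
    field_simp
  -- integrability of exp (t * sum)
  have hint_sum : Integrable (fun ω => Real.exp (t * (∑ i, Y i) ω)) ℙ :=
    hYindep.integrable_exp_mul_sum hYmeas (fun i _ => hint i)
  -- Chernoff
  set ε : ℝ := (Real.exp 1 + 2) * W / P with hεdef
  have chern := measure_ge_le_exp_mul_mgf (μ := ℙ) (X := ∑ i, Y i) ε ht.le hint_sum
  have htε : t * ε = (Real.exp 1 + 2) * Real.log P := by
    have hWne : W ≠ 0 := ne_of_gt hW
    have hPne : (P:ℝ) ≠ 0 := ne_of_gt hP0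
    rw [hεdef, htdef]
    field_simp
  have hbound : Real.exp (-t * ε) * mgf (∑ i, Y i) ℙ t ≤ (P:ℝ) ^ (-3 : ℝ) := by
    have h1 : Real.exp (-t * ε) * mgf (∑ i, Y i) ℙ t ≤
        Real.exp (-t * ε) * Real.exp ((Real.exp 1 - 1) * Real.log P) := by
      apply mul_le_mul_of_nonneg_left hmgf_sum (Real.exp_nonneg _)
    refine h1.trans ?_
    rw [← Real.exp_add]
    rw [Real.rpow_def_of_pos hP0]
    apply Real.exp_le_exp.mpr
    rw [neg_mul, htε]
    ring_nf
    linarith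
  -- the event in question
  have hsetE : {ω : Ω | (Real.exp 1 + 2) * W / P ≤
      ∑ i ∈ Finset.univ.filter (fun i => X i ω = b), w i} = {ω | ε ≤ (∑ i, Y i) ω} := by
    ext ω
    simp only [Set.mem_setOf_eq, hεdef]
    have : (∑ i, Y i) ω = ∑ i ∈ Finset.univ.filter (fun i => X i ω = b), w i := by
      rw [Finset.sum_apply, Finset.sum_filter]
    rw [this]
  rw [hsetE]
  have hne : ℙ {ω | ε ≤ (∑ i, Y i) ω} ≠ ⊤ := measure_ne_top _ _
  calc ℙ {ω | ε ≤ (∑ i, Y i) ω}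
      = ENNReal.ofReal (ℙ {ω | ε ≤ (∑ i, Y i) ω}).toReal := (ENNReal.ofReal_toReal hne).symm
    _ ≤ ENNReal.ofReal ((P:ℝ) ^ (-3 : ℝ)) :=
        ENNReal.ofReal_le_ofReal (chern.trans hbound)

/-- weighted balls with total weight W, each weight < W/(P log P), placed
independently uniformly at random into P bins; whp every bin gets total weight O(W/P). -/
theorem stmt_3 :
    ∃ C : ℝ, 0 < C ∧ ∃ c' : ℝ, 1 ≤ c' ∧
    ∀ (P m : ℕ), 2 ≤ P →
    ∀ (w : Fin m → ℝ), (∀ i, 0 ≤ w i) →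
    (∀ i, w i < (∑ j, w j) / (P * Real.log P)) →
    ∀ (Ω : Type) [MeasureSpace Ω] [IsProbabilityMeasure (ℙ : Measure Ω)]
      (X : Fin m → Ω → Fin P),
      (∀ i, Measurable (X i)) →
      iIndepFun X ℙ →
      (∀ i b, ℙ {ω | X i ω = b} = (P : ENNReal)⁻¹) →
      1 - ENNReal.ofReal ((P : ℝ) ^ (-c')) ≤
        ℙ {ω | ∀ b : Fin P,
          (∑ i ∈ Finset.univ.filter (fun i => X i ω = b), w i) ≤ C * (∑ j, w j) / P} := by
  classical
  refine ⟨Real.exp 1 + 2, by positivity, 2, one_le_two, ?_⟩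
  intro P m hP w hw hwlt Ω _ _ X hX hindep hunif
  set W : ℝ := ∑ j, w j with hWdef
  have hP0 : (0:ℝ) < P := by positivity
  have hWnonneg : 0 ≤ W := Finset.sum_nonneg (fun i _ => hw i)
  rcases eq_or_lt_of_le hWnonneg with hW0 | hW
  · -- W = 0 : every weight is 0, event is universal
    have hwz : ∀ i, w i = 0 := by
      intro i
      have := (Finset.sum_eq_zero_iff_of_nonneg (fun j _ => hw j)).mp hW0.symm
      exact this i (Finset.mem_univ i)
    have : {ω : Ω | ∀ b : Fin P,
        (∑ i ∈ Finset.univ.filter (fun i => X i ω = b), w i)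
          ≤ (Real.exp 1 + 2) * W / P} = Set.univ := by
      ext ω
      simp only [Set.mem_setOf_eq, Set.mem_univ, iff_true]
      intro b
      rw [Finset.sum_eq_zero (fun i _ => hwz i), ← hW0]
      simp
    rw [this, measure_univ]
    exact tsub_le_self
  · -- main case W > 0
    set E : Set Ω := {ω | ∀ b : Fin P,
        (∑ i ∈ Finset.univ.filter (fun i => X i ω = b), w i)
          ≤ (Real.exp 1 + 2) * W / P} with hEdef
    -- complement is contained in the union of per-bin bad events
    have hsub : Eᶜ ⊆ ⋃ b : Fin P, {ω | (Real.exp 1 + 2) * W / P ≤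
        ∑ i ∈ Finset.univ.filter (fun i => X i ω = b), w i} := by
      intro ω hω
      simp only [hEdef, Set.mem_compl_iff, Set.mem_setOf_eq, not_forall] at hω
      obtain ⟨b, hb⟩ := hω
      exact Set.mem_iUnion.mpr ⟨b, le_of_lt (lt_of_not_ge hb)⟩
    have hcompl : ℙ Eᶜ ≤ ENNReal.ofReal ((P:ℝ) ^ (-(2:ℝ))) := by
      calc ℙ Eᶜ ≤ ℙ (⋃ b : Fin P, {ω | (Real.exp 1 + 2) * W / P ≤
              ∑ i ∈ Finset.univ.filter (fun i => X i ω = b), w i}) := measure_mono hsub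
        _ ≤ ∑' b : Fin P, ℙ {ω | (Real.exp 1 + 2) * W / P ≤
              ∑ i ∈ Finset.univ.filter (fun i => X i ω = b), w i} := measure_iUnion_le _
        _ ≤ ∑' _ : Fin P, ENNReal.ofReal ((P:ℝ) ^ (-3 : ℝ)) := by
            apply ENNReal.tsum_le_tsum
            intro b
            exact bin_bound hP hw hwlt hW X hX hindep hunif b
        _ = (P : ENNReal) * ENNReal.ofReal ((P:ℝ) ^ (-3 : ℝ)) := by
            rw [tsum_fintype]
            simp [Finset.sum_const, Finset.card_univ, nsmul_eq_mul]
        _ = ENNReal.ofReal ((P:ℝ) ^ (-(2:ℝ))) := by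
            rw [← ENNReal.ofReal_natCast P, ← ENNReal.ofReal_mul (by positivity)]
            congr 1
            rw [show (P:ℝ) * (P:ℝ) ^ (-3:ℝ) = (P:ℝ) ^ (1:ℝ) * (P:ℝ) ^ (-3:ℝ) from by
              rw [Real.rpow_one], ← Real.rpow_add hP0]
            norm_num
    -- from the complement bound to the lower bound
    have hunion : (1 : ENNReal) ≤ ℙ E + ℙ Eᶜ := by
      have := measure_union_le (μ := (ℙ : Measure Ω)) E Eᶜ
      rw [Set.union_compl_self, measure_univ] at this
      exact this
    have h1 : 1 - ENNReal.ofReal ((P:ℝ) ^ (-(2:ℝ))) ≤ 1 - ℙ Eᶜ :=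
      tsub_le_tsub_left hcompl 1
    refine h1.trans ?_
    rw [tsub_le_iff_right]
    exact hunion
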